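/- arXiv:2505.24425 — 4 statements merged into one kernel-verified Lean document; each statement's English description precedes it below -/
import Mathlib

section
/- If |γⱼ| < 1 for all 1 ≤ j ≤ n, then the Wall polynomial Bₙ has no zeros in the closed unit disk. -/
open Complex

/-- The Wall polynomials `(Aₙ, Aₙ*, Bₙ, Bₙ*)` associated to a sequence of
Schur parameters `γ`. -/
noncomputable def wall (γ : ℕ → ℂ) : ℕ → (ℂ → ℂ) × (ℂ → ℂ) × (ℂ → ℂ) × (ℂ → ℂ)
  | 0 => (fun _ => γ 0, fun _ => (starRingEnd ℂ) (γ 0), fun _ => 1, fun _ => 1)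
  | n + 1 =>
      let A := (wall γ n).1
      let As := (wall γ n).2.1
      let B := (wall γ n).2.2.1
      let Bs := (wall γ n).2.2.2
      (fun z => A z + γ (n+1) * z * Bs z,
       fun z => z * As z + (starRingEnd ℂ) (γ (n+1)) * B z,
       fun z => B z + γ (n+1) * z * As z,
       fun z => z * Bs z + (starRingEnd ℂ) (γ (n+1)) * A z)

lemma wall_key_id (b a g z : ℂ) :
    Complex.normSq (b + g * z * a) - Complex.normSq (z * a + (starRingEnd ℂ) g * b) =
      (1 - Complex.normSq g) * (Complex.normSq b - Complex.normSq z * Complex.normSq a) := by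
  simp only [Complex.normSq_apply, Complex.add_re, Complex.add_im, Complex.mul_re,
    Complex.mul_im, Complex.conj_re, Complex.conj_im]
  ring

lemma wall_As_lt_B (γ : ℕ → ℂ) (n : ℕ)
    (hγ0 : ‖γ 0‖ < 1) (hγ : ∀ j, 1 ≤ j → j ≤ n → ‖γ j‖ < 1) :
    ∀ z : ℂ, ‖z‖ ≤ 1 → ‖(wall γ n).2.1 z‖ < ‖(wall γ n).2.2.1 z‖ := by
  induction n with
  | zero =>
      intro z hz
      simpa [wall] using hγ0
  | succ n ih =>
      have ih' := ih (fun j h1 h2 => hγ j h1 (h2.trans (Nat.le_succ n)))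
      intro z hz
      have hg : ‖γ (n + 1)‖ < 1 := hγ (n + 1) (by omega) le_rfl
      have h1 : ‖(wall γ n).2.1 z‖ < ‖(wall γ n).2.2.1 z‖ := ih' z hz
      set a := (wall γ n).2.1 z with ha
      set b := (wall γ n).2.2.1 z with hb
      have hgoal : ‖z * a + (starRingEnd ℂ) (γ (n + 1)) * b‖ < ‖b + γ (n + 1) * z * a‖ := by
        have hsq : Complex.normSq (z * a + (starRingEnd ℂ) (γ (n + 1)) * b) <
            Complex.normSq (b + γ (n + 1) * z * a) := by
          have hid := wall_key_id b a (γ (n + 1)) z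
          have hg2 : Complex.normSq (γ (n + 1)) < 1 := by
            rw [Complex.normSq_eq_norm_sq]
            nlinarith [norm_nonneg (γ (n + 1))]
          have hza : Complex.normSq z * Complex.normSq a < Complex.normSq b := by
            have h2 : Complex.normSq a < Complex.normSq b := by
              rw [Complex.normSq_eq_norm_sq, Complex.normSq_eq_norm_sq]
              exact pow_lt_pow_left₀ h1 (norm_nonneg _) (by norm_num)
            calc Complex.normSq z * Complex.normSq a ≤ 1 * Complex.normSq a := by
                  apply mul_le_mul_of_nonneg_right _ (Complex.normSq_nonneg a)
                  rw [Complex.normSq_eq_norm_sq]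
                  calc ‖z‖ ^ 2 ≤ 1 ^ 2 := by
                        exact pow_le_pow_left₀ (norm_nonneg _) hz 2
                    _ = 1 := one_pow 2
              _ = Complex.normSq a := one_mul _
              _ < Complex.normSq b := h2
          nlinarith [Complex.normSq_nonneg a, Complex.normSq_nonneg (γ (n + 1))]
        have := hsq
        rw [Complex.normSq_eq_norm_sq, Complex.normSq_eq_norm_sq] at this
        exact lt_of_pow_lt_pow_left₀ 2 (norm_nonneg _) this
      simpa [wall] using hgoal

theorem wall_B_nonvanishing (γ : ℕ → ℂ) (n : ℕ)
    (hγ0 : ‖γ 0‖ < 1) (hγ : ∀ j, 1 ≤ j → j ≤ n → ‖γ j‖ < 1) :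
    ∀ z : ℂ, ‖z‖ ≤ 1 → (wall γ n).2.2.1 z ≠ 0 := by
  intro z hz
  have h := wall_As_lt_B γ n hγ0 hγ z hz
  have : 0 < ‖(wall γ n).2.2.1 z‖ := lt_of_le_of_lt (norm_nonneg _) h
  exact norm_pos_iff.mp this
end

section
/- Let P(ξ) be a trigonometric polynomial on 𝕋^d of multi-degree at most n with real coefficients in the real/imaginary basis. Then under the substitution ξ_j = Ψ_{k_j}(t_j) (each Ψ_{k_j} being one of the two rational circle charts Ψ₁, Ψ₂), there exists a real polynomial Q ∈ ℝ[t₁,...,t_d] of total degree at most 2|n|d such that P(Φ(t)) = Q(t)/∏_{j=1}^{d}(1 + t_j²)^{|n|} for all t ∈ [−1,1]^d; consequently P(Φ(t)) > 0 if and only if Q(t) > 0. -/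
open Complex Real

/-- Rational (Weierstrass substitution) parametrization of the circle. -/
noncomputable def Psi1 (t : ℝ) : ℂ :=
  (((1 - t ^ 2) / (1 + t ^ 2) : ℝ) : ℂ) + (((2 * t) / (1 + t ^ 2) : ℝ) : ℂ) * Complex.I

/-- Coefficient-wise real part of a complex multivariate polynomial. -/
noncomputable def rePoly {σ : Type*} (p : MvPolynomial σ ℂ) : MvPolynomial σ ℝ :=
  ∑ m ∈ p.support, MvPolynomial.monomial m (p.coeff m).re

lemma rePoly_totalDegree {σ : Type*} (p : MvPolynomial σ ℂ) :
    (rePoly p).totalDegree ≤ p.totalDegree := by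
  refine (MvPolynomial.totalDegree_finset_sum _ _).trans ?_
  apply Finset.sup_le
  intro m hm
  exact (MvPolynomial.totalDegree_monomial_le _ _).trans (MvPolynomial.le_totalDegree hm)

lemma rePoly_eval {σ : Type*} (p : MvPolynomial σ ℂ) (t : σ → ℝ) :
    MvPolynomial.eval t (rePoly p) = (MvPolynomial.eval (fun j => ((t j : ℝ) : ℂ)) p).re := by
  rw [rePoly, map_sum, MvPolynomial.eval_eq _ p, Complex.re_sum]
  refine Finset.sum_congr rfl fun m hm => ?_
  rw [MvPolynomial.eval_monomial]
  have hcast : ∏ i ∈ m.support, ((t i : ℝ) : ℂ) ^ m i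
      = ((∏ i ∈ m.support, t i ^ m i : ℝ) : ℂ) := by push_cast; rfl
  simp only [Finsupp.prod]
  rw [hcast]
  simp only [Complex.mul_re, Complex.ofReal_re, Complex.ofReal_im, mul_zero, sub_zero]

lemma psi_mul (u : ℝ) :
    ((1 + u ^ 2 : ℝ) : ℂ) * Psi1 u = 1 - (u : ℂ) ^ 2 + 2 * Complex.I * (u : ℂ) := by
  have h : (1 + u ^ 2 : ℝ) ≠ 0 := by positivity
  have hC : (1 : ℂ) + (u : ℂ) ^ 2 ≠ 0 := by exact_mod_cast Complex.ofReal_ne_zero.mpr h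
  simp only [Psi1]
  push_cast
  field_simp

lemma psi_mul_conj (u : ℝ) :
    ((1 + u ^ 2 : ℝ) : ℂ) * (starRingEnd ℂ) (Psi1 u)
      = 1 - (u : ℂ) ^ 2 + -(2 * Complex.I) * (u : ℂ) := by
  have h : (1 + u ^ 2 : ℝ) ≠ 0 := by positivity
  have hC : (1 : ℂ) + (u : ℂ) ^ 2 ≠ 0 := by exact_mod_cast Complex.ofReal_ne_zero.mpr h
  simp only [Psi1, map_add, map_mul, Complex.conj_ofReal, Complex.conj_I]
  push_cast
  field_simp

theorem trig_polynomial_chart_substitution (d : ℕ) (n : Fin d → ℕ)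
    (r rt : ((j : Fin d) → Fin (n j + 1)) → ℝ)
    (k : Fin d → Bool)
    (P : (Fin d → ℂ) → ℂ)
    (hP : ∀ ξ : Fin d → ℂ, P ξ =
      ∑ α : (j : Fin d) → Fin (n j + 1),
        ((r α : ℂ) *
            ((∏ j, (starRingEnd ℂ) (ξ j) ^ (α j : ℕ)) + ∏ j, ξ j ^ (α j : ℕ)) / 2
          + (rt α : ℂ) *
            ((∏ j, (starRingEnd ℂ) (ξ j) ^ (α j : ℕ)) - ∏ j, ξ j ^ (α j : ℕ))
              / (2 * Complex.I)))
    (Φ : (Fin d → ℝ) → Fin d → ℂ)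
    (hΦ : ∀ t j, Φ t j = if k j then Psi1 (t j) else - Psi1 (t j)) :
    ∃ Q : MvPolynomial (Fin d) ℝ,
      Q.totalDegree ≤ 2 * (∑ j, n j) * d ∧
      (∀ t ∈ Set.univ.pi fun _ : Fin d => Set.Icc (-1 : ℝ) 1,
        P (Φ t) =
          ((MvPolynomial.eval t Q / ∏ j, (1 + t j ^ 2) ^ (∑ j, n j) : ℝ) : ℂ)) ∧
      (∀ t ∈ Set.univ.pi fun _ : Fin d => Set.Icc (-1 : ℝ) 1,
        (0 < (P (Φ t)).re ↔ 0 < MvPolynomial.eval t Q)) := by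
  classical
  set N := ∑ j, n j with hN
  have hαN : ∀ (α : (j : Fin d) → Fin (n j + 1)) (j : Fin d), (α j : ℕ) ≤ N := by
    intro α j
    exact le_trans (Nat.lt_succ_iff.mp (α j).is_lt)
      (Finset.single_le_sum (f := n) (fun _ _ => Nat.zero_le _) (Finset.mem_univ j))
  set e : Fin d → ℂ := fun j => if k j then 1 else -1 with he
  set Zp : Fin d → MvPolynomial (Fin d) ℂ := fun j =>
    MvPolynomial.C (e j) *
      ((1 - MvPolynomial.X j ^ 2) + MvPolynomial.C (2 * Complex.I) * MvPolynomial.X j) with hZp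
  set Wp : Fin d → MvPolynomial (Fin d) ℂ := fun j =>
    MvPolynomial.C (e j) *
      ((1 - MvPolynomial.X j ^ 2) + MvPolynomial.C (-(2 * Complex.I)) * MvPolynomial.X j) with hWp
  set Dp : Fin d → MvPolynomial (Fin d) ℂ := fun j => 1 + MvPolynomial.X j ^ 2 with hDp
  set A : ((j : Fin d) → Fin (n j + 1)) → MvPolynomial (Fin d) ℂ := fun α =>
    ∏ j, Wp j ^ (α j : ℕ) * Dp j ^ (N - (α j : ℕ)) with hA
  set B : ((j : Fin d) → Fin (n j + 1)) → MvPolynomial (Fin d) ℂ := fun α =>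
    ∏ j, Zp j ^ (α j : ℕ) * Dp j ^ (N - (α j : ℕ)) with hB
  set Qc : MvPolynomial (Fin d) ℂ :=
    ∑ α : (j : Fin d) → Fin (n j + 1),
      (MvPolynomial.C ((r α : ℂ) / 2) * (A α + B α)
        + MvPolynomial.C ((rt α : ℂ) / (2 * Complex.I)) * (A α - B α)) with hQc
  -- degree bounds
  have hdeg2 : ∀ (c₁ c₂ : ℂ) (j : Fin d),
      (MvPolynomial.C c₁ *
        ((1 - MvPolynomial.X j ^ 2) + MvPolynomial.C c₂ * MvPolynomial.X j)).totalDegree ≤ 2 := by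
    intro c₁ c₂ j
    refine (MvPolynomial.totalDegree_mul _ _).trans ?_
    rw [MvPolynomial.totalDegree_C, zero_add]
    refine (MvPolynomial.totalDegree_add _ _).trans ?_
    refine max_le ?_ ?_
    · refine (MvPolynomial.totalDegree_sub _ _).trans ?_
      refine max_le ?_ ?_
      · simp [MvPolynomial.totalDegree_one]
      · refine (MvPolynomial.totalDegree_pow _ _).trans ?_
        simp [MvPolynomial.totalDegree_X]
    · refine (MvPolynomial.totalDegree_mul _ _).trans ?_
      simp [MvPolynomial.totalDegree_C, MvPolynomial.totalDegree_X]
  have hdegD : ∀ j, (Dp j).totalDegree ≤ 2 := by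
    intro j
    rw [hDp]
    refine (MvPolynomial.totalDegree_add _ _).trans ?_
    refine max_le ?_ ?_
    · simp [MvPolynomial.totalDegree_one]
    · refine (MvPolynomial.totalDegree_pow _ _).trans ?_
      simp [MvPolynomial.totalDegree_X]
  have hdegAB : ∀ (f : Fin d → MvPolynomial (Fin d) ℂ), (∀ j, (f j).totalDegree ≤ 2) →
      ∀ α : (j : Fin d) → Fin (n j + 1),
      (∏ j, f j ^ (α j : ℕ) * Dp j ^ (N - (α j : ℕ))).totalDegree ≤ 2 * N * d := by
    intro f hf α
    refine (MvPolynomial.totalDegree_finset_prod _ _).trans ?_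
    have hle : ∀ j ∈ Finset.univ,
        (f j ^ (α j : ℕ) * Dp j ^ (N - (α j : ℕ))).totalDegree ≤ 2 * N := by
      intro j _
      refine (MvPolynomial.totalDegree_mul _ _).trans ?_
      have h1 : (f j ^ (α j : ℕ)).totalDegree ≤ (α j : ℕ) * 2 :=
        (MvPolynomial.totalDegree_pow _ _).trans (Nat.mul_le_mul_left _ (hf j))
      have h2 : (Dp j ^ (N - (α j : ℕ))).totalDegree ≤ (N - (α j : ℕ)) * 2 :=
        (MvPolynomial.totalDegree_pow _ _).trans (Nat.mul_le_mul_left _ (hdegD j))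
      have := hαN α j
      calc _ ≤ (α j : ℕ) * 2 + (N - (α j : ℕ)) * 2 := add_le_add h1 h2
        _ ≤ 2 * N := by omega
    refine (Finset.sum_le_sum hle).trans ?_
    rw [Finset.sum_const, Finset.card_univ, Fintype.card_fin, smul_eq_mul]
    exact le_of_eq (by ring)
  have hdegQc : Qc.totalDegree ≤ 2 * N * d := by
    rw [hQc]
    refine (MvPolynomial.totalDegree_finset_sum _ _).trans ?_
    apply Finset.sup_le
    intro α _
    refine (MvPolynomial.totalDegree_add _ _).trans (max_le ?_ ?_)
    · refine (MvPolynomial.totalDegree_mul _ _).trans ?_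
      rw [MvPolynomial.totalDegree_C, zero_add]
      refine (MvPolynomial.totalDegree_add _ _).trans (max_le ?_ ?_)
      · exact hdegAB _ (fun j => by rw [hWp]; exact hdeg2 _ _ j) α
      · exact hdegAB _ (fun j => by rw [hZp]; exact hdeg2 _ _ j) α
    · refine (MvPolynomial.totalDegree_mul _ _).trans ?_
      rw [MvPolynomial.totalDegree_C, zero_add]
      refine (MvPolynomial.totalDegree_sub _ _).trans (max_le ?_ ?_)
      · exact hdegAB _ (fun j => by rw [hWp]; exact hdeg2 _ _ j) α
      · exact hdegAB _ (fun j => by rw [hZp]; exact hdeg2 _ _ j) α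
  -- P is real-valued
  have hPreal : ∀ ξ : Fin d → ℂ, (starRingEnd ℂ) (P ξ) = P ξ := by
    intro ξ
    rw [hP ξ, map_sum]
    refine Finset.sum_congr rfl fun α _ => ?_
    simp only [map_add, map_mul, map_div₀, map_sub, map_prod, map_pow, Complex.conj_conj,
      Complex.conj_I, Complex.conj_ofReal, map_ofNat]
    have hI := Complex.I_ne_zero
    field_simp
    ring
  have hre : ∀ ξ : Fin d → ℂ, P ξ = ((P ξ).re : ℂ) :=
    fun ξ => (Complex.conj_eq_iff_re.mp (hPreal ξ)).symm
  -- evaluation identity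
  have hQceval : ∀ t : Fin d → ℝ,
      MvPolynomial.eval (fun j => ((t j : ℝ) : ℂ)) Qc
        = ((∏ j, (1 + t j ^ 2) ^ N : ℝ) : ℂ) * P (Φ t) := by
    intro t
    set ξ : Fin d → ℂ := fun j => ((t j : ℝ) : ℂ) with hξ
    have hsC : ∀ j : Fin d, ((1 : ℂ) + (t j : ℂ) ^ 2) ≠ 0 := by
      intro j
      have h : (1 + t j ^ 2 : ℝ) ≠ 0 := by positivity
      exact_mod_cast (Complex.ofReal_ne_zero.mpr h : ((1 + t j ^ 2 : ℝ) : ℂ) ≠ 0)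
    have hz : ∀ j, MvPolynomial.eval ξ (Zp j) = ((1 + t j ^ 2 : ℝ) : ℂ) * Φ t j := by
      intro j
      rw [hZp]
      simp only [map_mul, map_add, map_sub, map_pow, map_one, MvPolynomial.eval_C,
        MvPolynomial.eval_X, hξ]
      rw [hΦ]
      simp only [he]
      by_cases hk : k j = true
      · rw [if_pos hk, if_pos hk, one_mul]
        exact (psi_mul (t j)).symm
      · rw [if_neg hk, if_neg hk, neg_one_mul, mul_neg]
        exact congrArg Neg.neg (psi_mul (t j)).symm
    have hw : ∀ j, MvPolynomial.eval ξ (Wp j)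
        = ((1 + t j ^ 2 : ℝ) : ℂ) * (starRingEnd ℂ) (Φ t j) := by
      intro j
      rw [hWp]
      simp only [map_mul, map_add, map_sub, map_pow, map_one, MvPolynomial.eval_C,
        MvPolynomial.eval_X, hξ]
      rw [hΦ]
      simp only [he]
      by_cases hk : k j = true
      · rw [if_pos hk, if_pos hk, one_mul]
        exact (psi_mul_conj (t j)).symm
      · rw [if_neg hk, if_neg hk, map_neg, neg_one_mul, mul_neg]
        exact congrArg Neg.neg (psi_mul_conj (t j)).symm
    have hd' : ∀ j, MvPolynomial.eval ξ (Dp j) = ((1 + t j ^ 2 : ℝ) : ℂ) := by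
      intro j
      rw [hDp]
      simp only [map_add, map_one, map_pow, MvPolynomial.eval_X]
      push_cast
      rfl
    have hprod : ∀ (g : Fin d → ℂ) (α : (j : Fin d) → Fin (n j + 1)),
        (∏ j, (((1 + t j ^ 2 : ℝ) : ℂ) * g j) ^ (α j : ℕ)
            * ((1 + t j ^ 2 : ℝ) : ℂ) ^ (N - (α j : ℕ)))
          = ((∏ j, (1 + t j ^ 2) ^ N : ℝ) : ℂ) * ∏ j, g j ^ (α j : ℕ) := by
      intro g α
      push_cast
      rw [← Finset.prod_mul_distrib]
      refine Finset.prod_congr rfl fun j _ => ?_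
      have hss : ((1 : ℂ) + (t j : ℂ) ^ 2) ^ (α j : ℕ)
          * ((1 : ℂ) + (t j : ℂ) ^ 2) ^ (N - (α j : ℕ))
          = ((1 : ℂ) + (t j : ℂ) ^ 2) ^ N := by
        rw [← pow_add, Nat.add_sub_cancel' (hαN α j)]
      calc (((1 : ℂ) + (t j : ℂ) ^ 2) * g j) ^ (α j : ℕ)
            * ((1 : ℂ) + (t j : ℂ) ^ 2) ^ (N - (α j : ℕ))
          = ((1 : ℂ) + (t j : ℂ) ^ 2) ^ (α j : ℕ)
            * ((1 : ℂ) + (t j : ℂ) ^ 2) ^ (N - (α j : ℕ)) * g j ^ (α j : ℕ) := by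
            rw [mul_pow]; ring
        _ = ((1 : ℂ) + (t j : ℂ) ^ 2) ^ N * g j ^ (α j : ℕ) := by rw [hss]
    have hAe : ∀ α, MvPolynomial.eval ξ (A α)
        = ((∏ j, (1 + t j ^ 2) ^ N : ℝ) : ℂ) * ∏ j, (starRingEnd ℂ) (Φ t j) ^ (α j : ℕ) := by
      intro α
      rw [hA]
      rw [map_prod]
      simp only [map_mul, map_pow, hw, hd']
      exact hprod _ α
    have hBe : ∀ α, MvPolynomial.eval ξ (B α)
        = ((∏ j, (1 + t j ^ 2) ^ N : ℝ) : ℂ) * ∏ j, (Φ t j) ^ (α j : ℕ) := by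
      intro α
      rw [hB]
      rw [map_prod]
      simp only [map_mul, map_pow, hz, hd']
      exact hprod _ α
    rw [hQc, map_sum, hP (Φ t), Finset.mul_sum]
    refine Finset.sum_congr rfl fun α _ => ?_
    simp only [map_add, map_mul, map_sub, MvPolynomial.eval_C, hAe, hBe]
    ring
  -- conclusion
  refine ⟨rePoly Qc, (rePoly_totalDegree _).trans hdegQc, ?_, ?_⟩
  all_goals
    intro t _
    have hD : (0 : ℝ) < ∏ j, (1 + t j ^ 2) ^ N := by positivity
    have h1 : MvPolynomial.eval t (rePoly Qc)
        = (∏ j, (1 + t j ^ 2) ^ N) * (P (Φ t)).re := by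
      rw [rePoly_eval, hQceval t, hre (Φ t), ← Complex.ofReal_mul, Complex.ofReal_re,
        Complex.ofReal_re]
  · rw [hre (Φ t), h1, mul_div_cancel_left₀ _ hD.ne']
  · rw [h1]
    constructor
    · intro h; exact mul_pos hD h
    · intro h; nlinarith
end

section
/- Let Q be a real measurable function on Δ = [−1,1]^d, let g̃ = χ_{{Q>0}} be the characteristic function of its positivity set, and let v ∈ L¹(λ) with 0 ≤ v ≤ 1. Then ∫_Δ (g̃ − v)·Q dλ ≥ Λ_{|Q|}(‖g̃ − v‖_{L¹(λ)}), where Λ_{|Q|}(ε) = inf { ∫ |Q|·w dλ : w ∈ L¹(λ), 0 ≤ w ≤ 1, ∫ w dλ ≥ ε }. -/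
open MeasureTheory

/-- The cube `Δ = [-1,1]^d`. -/
def cubeSet (d : ℕ) : Set (Fin d → ℝ) := Set.univ.pi fun _ : Fin d => Set.Icc (-1 : ℝ) 1

/-- Lewis's functional `Λ_F(ε) = inf { ∫ F w dλ : 0 ≤ w ≤ 1, ∫ w dλ ≥ ε }`. -/
noncomputable def LamF (d : ℕ) (F : (Fin d → ℝ) → ℝ) (ε : ℝ) : ℝ :=
  sInf {x : ℝ | ∃ w : (Fin d → ℝ) → ℝ, Measurable w ∧ (∀ t, 0 ≤ w t ∧ w t ≤ 1) ∧
    ε ≤ (∫ t in cubeSet d, w t) ∧ x = ∫ t in cubeSet d, F t * w t}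

theorem shade_versus_characteristic_estimate (d : ℕ) (Q : (Fin d → ℝ) → ℝ)
    (hQ : Measurable Q) (v : (Fin d → ℝ) → ℝ) (hv : Measurable v)
    (hv01 : ∀ t, 0 ≤ v t ∧ v t ≤ 1) :
    LamF d (fun t => |Q t|)
        (∫ t in cubeSet d, |Set.indicator {t | 0 < Q t} (fun _ => (1:ℝ)) t - v t|)
      ≤ ∫ t in cubeSet d,
          (Set.indicator {t | 0 < Q t} (fun _ => (1:ℝ)) t - v t) * Q t := by
  set g : (Fin d → ℝ) → ℝ := Set.indicator {t | 0 < Q t} (fun _ => (1:ℝ)) with hg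
  have hgmeas : Measurable g := by
    apply Measurable.indicator measurable_const
    exact measurableSet_lt measurable_const hQ
  have hptw : ∀ t, (g t - v t) * Q t = |Q t| * |g t - v t| := by
    intro t
    by_cases h : (0:ℝ) < Q t
    · have h1 : g t = 1 := by simp [hg, Set.indicator_apply, Set.mem_setOf_eq, h]
      rw [h1, abs_of_pos h, abs_of_nonneg (by linarith [(hv01 t).2])]
      ring
    · have h1 : g t = 0 := by simp [hg, Set.indicator_apply, Set.mem_setOf_eq, h]
      push_neg at h
      rw [h1, abs_of_nonpos h, abs_of_nonpos (by linarith [(hv01 t).1])]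
      ring
  have hw01 : ∀ t, 0 ≤ |g t - v t| ∧ |g t - v t| ≤ 1 := by
    intro t
    refine ⟨abs_nonneg _, abs_le.2 ⟨?_, ?_⟩⟩
    · by_cases h : (0:ℝ) < Q t
      · simp only [hg, Set.indicator_apply, Set.mem_setOf_eq, if_pos h]; linarith [(hv01 t).2]
      · simp only [hg, Set.indicator_apply, Set.mem_setOf_eq, if_neg h]; linarith [(hv01 t).2]
    · by_cases h : (0:ℝ) < Q t
      · simp only [hg, Set.indicator_apply, Set.mem_setOf_eq, if_pos h]; linarith [(hv01 t).1]
      · simp only [hg, Set.indicator_apply, Set.mem_setOf_eq, if_neg h]; linarith [(hv01 t).1]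
  have hcube : MeasurableSet (cubeSet d) :=
    MeasurableSet.univ_pi fun _ => measurableSet_Icc
  apply csInf_le
  · refine ⟨0, fun x hx => ?_⟩
    obtain ⟨w, hwm, hw01', -, hxeq⟩ := hx
    rw [hxeq]
    exact setIntegral_nonneg hcube fun t _ =>
      mul_nonneg (abs_nonneg _) (hw01' t).1
  · refine ⟨fun t => |g t - v t|, (hgmeas.sub hv).abs, hw01, le_refl _, ?_⟩
    exact integral_congr_ae (Filter.Eventually.of_forall fun t => hptw t)
end

section
/- For λ ∈ [0, 1/4], the function f_λ(z₁, z₂) = z₁ + λ·z₂² maps the open Euclidean unit ball 𝔹₂ ⊂ ℂ² into the closed unit disk and sup_{z ∈ 𝔹₂} |f_λ(z)| = 1. -/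
theorem ball_extremal_family (lam : ℝ) (h0 : 0 ≤ lam) (h1 : lam ≤ 1/4) :
    (∀ z₁ z₂ : ℂ, ‖z₁‖ ^ 2 + ‖z₂‖ ^ 2 < 1 →
      ‖z₁ + (lam : ℂ) * z₂ ^ 2‖ ≤ 1) ∧
    sSup {x : ℝ | ∃ z₁ z₂ : ℂ, ‖z₁‖ ^ 2 + ‖z₂‖ ^ 2 < 1 ∧
        x = ‖z₁ + (lam : ℂ) * z₂ ^ 2‖} = 1 := by
  have hbound : ∀ z₁ z₂ : ℂ, ‖z₁‖ ^ 2 + ‖z₂‖ ^ 2 < 1 →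
      ‖z₁ + (lam : ℂ) * z₂ ^ 2‖ ≤ 1 := by
    intro z₁ z₂ hz
    have h1' : ‖z₁ + (lam : ℂ) * z₂ ^ 2‖ ≤ ‖z₁‖ + lam * ‖z₂‖ ^ 2 := by
      calc ‖z₁ + (lam : ℂ) * z₂ ^ 2‖ ≤ ‖z₁‖ + ‖(lam : ℂ) * z₂ ^ 2‖ := norm_add_le _ _
        _ = ‖z₁‖ + lam * ‖z₂‖ ^ 2 := by
            rw [norm_mul, norm_pow, Complex.norm_real, Real.norm_of_nonneg h0]
    have hn1 : (0:ℝ) ≤ ‖z₁‖ := norm_nonneg _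
    have hn2 : (0:ℝ) ≤ ‖z₂‖ := norm_nonneg _
    have hz1 : ‖z₁‖ < 1 := by nlinarith [sq_nonneg ‖z₂‖]
    nlinarith [sq_nonneg (1 - ‖z₁‖), sq_nonneg ‖z₂‖, mul_nonneg h0 (sq_nonneg ‖z₂‖)]
  refine ⟨hbound, ?_⟩
  set S : Set ℝ := {x : ℝ | ∃ z₁ z₂ : ℂ, ‖z₁‖ ^ 2 + ‖z₂‖ ^ 2 < 1 ∧
      x = ‖z₁ + (lam : ℂ) * z₂ ^ 2‖} with hS
  have hmem : ∀ r : ℝ, 0 ≤ r → r < 1 → r ∈ S := by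
    intro r hr0 hr1
    refine ⟨(r : ℂ), 0, ?_, ?_⟩
    · simp only [norm_zero]
      rw [Complex.norm_real, Real.norm_of_nonneg hr0]
      nlinarith
    · simp [Complex.norm_real, abs_of_nonneg hr0]
  have hne : S.Nonempty := ⟨0, hmem 0 le_rfl one_pos⟩
  have hbdd : BddAbove S := by
    refine ⟨1, ?_⟩
    rintro x ⟨z₁, z₂, hz, rfl⟩
    exact hbound z₁ z₂ hz
  refine le_antisymm (csSup_le hne ?_) ?_
  · rintro x ⟨z₁, z₂, hz, rfl⟩
    exact hbound z₁ z₂ hz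
  · refine le_of_forall_lt fun c hc => ?_
    set r : ℝ := (max c 0 + 1) / 2 with hr
    have hr0 : 0 ≤ r := by positivity
    have hr1 : r < 1 := by
      have : max c 0 < 1 := max_lt hc one_pos
      simp only [hr]; linarith
    have hcr : c < r := by
      have : c ≤ max c 0 := le_max_left _ _
      simp only [hr]; linarith [le_max_right c 0]
    exact lt_of_lt_of_le hcr (le_csSup hbdd (hmem r hr0 hr1))
end
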